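/- Let x_1,...,x_d be vectors in a Hilbert space H with positive definite Gram matrix Σ = (⟨x_i, x_j⟩). Fix j ∈ [d] and S ⊆ [d]\{j}, and define T_j(S) = {T ⊆ [d]\{j} : P_T P_j = P_S P_j}. Then T_j(S), ordered by inclusion, is closed under intersections: if T_1, T_2 ∈ T_j(S) then T_1 ∩ T_2 ∈ T_j(S). -/

import Mathlib

theorem stmt_5 {H : Type*} [NormedAddCommGroup H] [InnerProductSpace ℝ H] [CompleteSpace H]
    {d : ℕ} (x : Fin d → H)
    (hGram : (Matrix.of fun (i j : Fin d) => (inner ℝ (x i) (x j) : ℝ)).PosDef)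
    (P : Finset (Fin d) → H →L[ℝ] H)
    (hsa : ∀ A, IsSelfAdjoint (P A))
    (hidem : ∀ A, P A * P A = P A)
    (hrange : ∀ A : Finset (Fin d), LinearMap.range (P A : H →ₗ[ℝ] H) = Submodule.span ℝ (x '' ↑A))
    (j : Fin d) (S : Finset (Fin d)) (hS : j ∉ S)
    (T₁ T₂ : Finset (Fin d)) (h1 : j ∉ T₁) (h2 : j ∉ T₂)
    (e1 : P T₁ * P {j} = P S * P {j}) (e2 : P T₂ * P {j} = P S * P {j}) :
    P (T₁ ∩ T₂) * P {j} = P S * P {j} := by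
  classical
  set K : Finset (Fin d) → Submodule ℝ H := fun A => Submodule.span ℝ (x '' ↑A) with hK
  -- linear independence
  have hli : ∀ g : Fin d → ℝ, (∑ i, g i • x i) = 0 → ∀ i, g i = 0 := by
    intro g hg
    by_contra h
    push_neg at h
    obtain ⟨i, hi⟩ := h
    have hg0 : g ≠ 0 := fun h0 => hi (congrFun h0 i)
    have hpos := hGram.dotProduct_mulVec_pos hg0
    have hcalc : dotProduct (star g)
        (Matrix.mulVec (Matrix.of fun i j => (inner ℝ (x i) (x j) : ℝ)) g)
        = (inner ℝ (∑ i, g i • x i) (∑ k, g k • x k) : ℝ) := by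
      rw [sum_inner]
      simp only [dotProduct, Matrix.mulVec, Matrix.of_apply, Pi.star_apply,
        star_trivial, inner_sum, real_inner_smul_left, real_inner_smul_right,
        dotProduct]
      refine Finset.sum_congr rfl fun i _ => ?_
      rw [Finset.mul_sum]
      refine Finset.sum_congr rfl fun k _ => ?_
      ring
    rw [hcalc, hg, inner_zero_left] at hpos
    exact lt_irrefl _ hpos
  -- membership in range
  have hmem : ∀ A v, P A v ∈ K A := by
    intro A v
    simp only [hK]
    rw [← hrange A]
    exact ⟨v, rfl⟩
  have happly : ∀ A v, P A (P A v) = P A v := by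
    intro A v
    have := DFunLike.congr_fun (hidem A) v
    simpa using this
  have hfix : ∀ A v, v ∈ K A → P A v = v := by
    intro A v hv
    simp only [hK] at hv
    rw [← hrange A] at hv
    obtain ⟨u, rfl⟩ := hv
    exact happly A u
  have horth : ∀ A v w, w ∈ K A → (inner ℝ (v - P A v) w : ℝ) = 0 := by
    intro A v w hw
    simp only [hK] at hw
    rw [← hrange A] at hw
    obtain ⟨u, rfl⟩ := hw
    have : (inner ℝ (v - P A v) (P A u) : ℝ) = inner ℝ (P A (v - P A v)) u := by
      rw [← ContinuousLinearMap.adjoint_inner_left, (hsa A).adjoint_eq]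
    erw [this]
    rw [map_sub, happly A v, sub_self, inner_zero_left]
  have huniq : ∀ A v w, w ∈ K A → (∀ u ∈ K A, (inner ℝ (v - w) u : ℝ) = 0) → P A v = w := by
    intro A v w hw hv
    have hz : P A v - w ∈ K A := Submodule.sub_mem _ (hmem A v) hw
    have h0 : (inner ℝ (P A v - w) (P A v - w) : ℝ) = 0 := by
      have e : (inner ℝ (P A v - w) (P A v - w) : ℝ)
          = -(inner ℝ (v - P A v) (P A v - w) : ℝ) + inner ℝ (v - w) (P A v - w) := by
        rw [← inner_neg_left, ← inner_add_left]
        congr 1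
        abel
      rw [e, horth A v _ hz, hv _ hz]
      ring
    exact sub_eq_zero.mp (inner_self_eq_zero.mp h0)
  -- span intersection
  have hsum_repr : ∀ (T : Finset (Fin d)) v, v ∈ K T →
      ∃ l : Fin d → ℝ, (∀ i, l i ≠ 0 → i ∈ T) ∧ (∑ i, l i • x i) = v := by
    intro T v hv
    simp only [hK] at hv
    rw [Finsupp.mem_span_image_iff_linearCombination] at hv
    obtain ⟨l, hl, rfl⟩ := hv
    refine ⟨fun i => l i, fun i hi => ?_, ?_⟩
    · exact hl (Finsupp.mem_support_iff.mpr hi)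
    · rw [Finsupp.linearCombination_apply, Finsupp.sum_fintype]
      intro i; simp
  have key : ∀ v, v ∈ K T₁ → v ∈ K T₂ → v ∈ K (T₁ ∩ T₂) := by
    intro v hv1 hv2
    obtain ⟨a, ha, hav⟩ := hsum_repr T₁ v hv1
    obtain ⟨b, hb, hbv⟩ := hsum_repr T₂ v hv2
    have heq : ∀ i, a i = b i := by
      have : (∑ i, (a i - b i) • x i) = 0 := by
        simp only [sub_smul, Finset.sum_sub_distrib, hav, hbv, sub_self]
      intro i
      have := hli _ this i
      linarith
    rw [← hav]
    refine Submodule.sum_mem _ fun i _ => ?_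
    by_cases hai : a i = 0
    · rw [hai, zero_smul]; exact Submodule.zero_mem _
    · refine Submodule.smul_mem _ _ (Submodule.subset_span ?_)
      refine ⟨i, ?_, rfl⟩
      simp only [Finset.coe_inter, Set.mem_inter_iff, Finset.mem_coe]
      refine ⟨ha i hai, hb i ?_⟩
      rw [← heq i]; exact hai
  -- x j fixed by P {j}
  have hxj : x j ∈ K {j} := by
    refine Submodule.subset_span ⟨j, ?_, rfl⟩
    simp
  have hfixj : P {j} (x j) = x j := hfix _ _ hxj
  set w := P S (x j) with hw
  have hT1 : P T₁ (x j) = w := by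
    have := DFunLike.congr_fun e1 (x j)
    simpa [ContinuousLinearMap.mul_apply, hfixj] using this
  have hT2 : P T₂ (x j) = w := by
    have := DFunLike.congr_fun e2 (x j)
    simpa [ContinuousLinearMap.mul_apply, hfixj] using this
  have hwI : w ∈ K (T₁ ∩ T₂) := key w (hT1 ▸ hmem T₁ (x j)) (hT2 ▸ hmem T₂ (x j))
  have hKle : K (T₁ ∩ T₂) ≤ K T₁ :=
    Submodule.span_mono (Set.image_mono (by simp [Finset.inter_subset_left]))
  have hPI : P (T₁ ∩ T₂) (x j) = w := by
    refine huniq _ _ _ hwI fun u hu => ?_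
    have := horth T₁ (x j) u (hKle hu)
    rwa [hT1] at this
  -- conclude
  ext h
  simp only [ContinuousLinearMap.mul_apply]
  have : P {j} h ∈ K {j} := hmem _ _
  simp only [hK] at this
  have himg : x '' (↑({j} : Finset (Fin d))) = {x j} := by simp
  rw [himg, Submodule.mem_span_singleton] at this
  obtain ⟨c, hc⟩ := this
  rw [← hc, map_smul, map_smul, hPI, hw]
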